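/- Let F be a finite nonempty set with |F| = m and let v : Finset F → ℝ be a positive cooperative game (v(S) > 0 for every S ⊆ F). Define for each j ∈ F the multiplicative Shapley value ψ^j(v) = exp( Σ_{c ⊆ F \ {j}} (|c|!·(m−|c|−1)!/m!) · (log v(c ∪ {j}) − log v(c)) ). Then the multiplicative Shapley values are geometrically efficient: v(∅) · ∏_{j ∈ F} ψ^j(v) = v(F). -/

import Mathlib

open Finset

/-- The key combinatorial identity for Shapley weights. -/
lemma xshap_coeff (m s : ℕ) (hm : 1 ≤ m) (hs : s ≤ m) :
    (s : ℝ) * (((s - 1).factorial * (m - (s - 1) - 1).factorial : ℕ) : ℝ) / (m.factorial : ℕ)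
      - ((m - s : ℕ) : ℝ) * ((s.factorial * (m - s - 1).factorial : ℕ) : ℝ) / (m.factorial : ℕ)
      = (if s = m then 1 else 0) - (if s = 0 then 1 else 0) := by
  have hmf : (0 : ℝ) < (m.factorial : ℝ) := by exact_mod_cast m.factorial_pos
  rcases Nat.eq_zero_or_pos s with hs0 | hs1
  · subst hs0
    have h1 : m * (m - 1).factorial = m.factorial := Nat.mul_factorial_pred (by omega)
    simp only [if_neg (by omega : ¬ (0 : ℕ) = m), if_pos rfl]
    rw [Nat.sub_zero, Nat.factorial_zero]
    push_cast [← h1]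
    field_simp
    ring
  · rcases eq_or_lt_of_le hs with hsm | hsm
    · subst hsm
      have h1 : s * (s - 1).factorial = s.factorial := Nat.mul_factorial_pred hs1.ne'
      simp only [if_pos rfl, if_neg (by omega : ¬ s = 0), Nat.sub_self]
      have h2 : s - (s - 1) - 1 = 0 := by omega
      rw [h2, Nat.factorial_zero]
      push_cast [← h1]
      field_simp
    · -- 0 < s < m
      have h1 : s * (s - 1).factorial = s.factorial := Nat.mul_factorial_pred hs1.ne'
      have h2 : (m - s) * (m - s - 1).factorial = (m - s).factorial :=
        Nat.mul_factorial_pred (by omega)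
      have h3 : m - (s - 1) - 1 = m - s := by omega
      simp only [if_neg (by omega : ¬ s = m), if_neg (by omega : ¬ s = 0)]
      rw [h3]
      push_cast [← h1, ← h2]
      field_simp
      ring

theorem xshap_geometric_efficiency
    {F : Type*} [Fintype F] [DecidableEq F] [Nonempty F]
    (v : Finset F → ℝ) (hv : ∀ S : Finset F, 0 < v S) :
    v ∅ *
      ∏ j : F,
        Real.exp (∑ c ∈ (Finset.univ.erase j).powerset,
          ((Nat.factorial c.card * Nat.factorial (Fintype.card F - c.card - 1) : ℝ) /
            Nat.factorial (Fintype.card F)) *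
          (Real.log (v (insert j c)) - Real.log (v c)))
      = v Finset.univ := by
  classical
  set m := Fintype.card F with hmdef
  have hm1 : 1 ≤ m := Fintype.card_pos
  set f : Finset F → ℝ := fun S => Real.log (v S) with hf
  set w : ℕ → ℝ := fun k =>
    ((k.factorial * (m - k - 1).factorial : ℕ) : ℝ) / (m.factorial : ℕ) with hw
  rw [← Real.exp_sum]
  have hpow : ∀ j : F, (univ.erase j).powerset
      = univ.powerset.filter (fun c => j ∉ c) := by
    intro j; ext c; simp [Finset.subset_erase]
  have key : (∑ j : F, ∑ c ∈ (univ.erase j).powerset,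
        w c.card * (f (insert j c) - f c)) = f univ - f ∅ := by
    have step1 : ∀ j : F, (∑ c ∈ (univ.erase j).powerset,
        w c.card * (f (insert j c) - f c))
        = (∑ S ∈ univ.powerset, (if j ∈ S then w (S.card - 1) * f S else 0))
          - (∑ S ∈ univ.powerset, (if j ∉ S then w S.card * f S else 0)) := by
      intro j
      simp only [mul_sub]
      rw [Finset.sum_sub_distrib]
      congr 1
      · rw [← Finset.sum_filter]
        refine Finset.sum_nbij' (fun c => insert j c) (fun S => S.erase j)
          ?_ ?_ ?_ ?_ ?_
        · intro c hc
          simp only [Finset.mem_powerset, Finset.mem_filter]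
          exact ⟨Finset.subset_univ _, Finset.mem_insert_self j c⟩
        · intro S hS
          exact Finset.mem_powerset.mpr (Finset.erase_subset_erase j (Finset.subset_univ S))
        · intro c hc
          have hj : j ∉ c := by
            rw [Finset.mem_powerset, Finset.subset_erase] at hc
            exact hc.2
          exact Finset.erase_insert hj
        · intro S hS
          simp only [Finset.mem_filter] at hS
          exact Finset.insert_erase hS.2
        · intro c hc
          have hj : j ∉ c := by
            rw [Finset.mem_powerset, Finset.subset_erase] at hc
            exact hc.2
          rw [Finset.card_insert_of_notMem hj, Nat.add_sub_cancel]
      · rw [hpow j, Finset.sum_filter]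
    calc (∑ j : F, ∑ c ∈ (univ.erase j).powerset,
        w c.card * (f (insert j c) - f c))
        = ∑ j : F, ((∑ S ∈ univ.powerset, (if j ∈ S then w (S.card - 1) * f S else 0))
          - (∑ S ∈ univ.powerset, (if j ∉ S then w S.card * f S else 0))) := by
          exact Finset.sum_congr rfl fun j _ => step1 j
      _ = ∑ S ∈ univ.powerset,
            ((S.card : ℝ) * (w (S.card - 1) * f S)
              - ((m - S.card : ℕ) : ℝ) * (w S.card * f S)) := by
          rw [Finset.sum_sub_distrib, Finset.sum_comm, Finset.sum_comm (s := univ)]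
          rw [← Finset.sum_sub_distrib]
          refine Finset.sum_congr rfl fun S hS => ?_
          congr 1
          · rw [Finset.sum_ite_mem, Finset.univ_inter, Finset.sum_const,
              nsmul_eq_mul]
          · have h : ∀ j : F, (if j ∉ S then w S.card * f S else 0)
                = (if j ∈ Sᶜ then w S.card * f S else 0) := by
              intro j; simp
            simp only [h]
            rw [Finset.sum_ite_mem, Finset.univ_inter, Finset.sum_const,
              nsmul_eq_mul, Finset.card_compl]
      _ = ∑ S ∈ univ.powerset,
            ((if S = univ then (1:ℝ) else 0) - (if S = ∅ then 1 else 0)) * f S := by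
          refine Finset.sum_congr rfl fun S hS => ?_
          have hSc : S.card ≤ m := by
            simpa [hmdef] using Finset.card_le_card (Finset.mem_powerset.mp hS)
          have hcard : (S = univ ↔ S.card = m) := by
            constructor
            · rintro rfl; simp [hmdef]
            · intro h; exact Finset.eq_univ_of_card S (by simpa [hmdef] using h)
          have hemp : (S = ∅ ↔ S.card = 0) := by simp
          have h2 : (S.card : ℝ) * w (S.card - 1) - ((m - S.card : ℕ) : ℝ) * w S.card
              = (if S = univ then (1:ℝ) else 0) - (if S = ∅ then 1 else 0) := by
            simp only [hw, hcard, hemp]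
            linear_combination xshap_coeff m S.card hm1 hSc
          linear_combination f S * h2
      _ = f univ - f ∅ := by
          simp only [sub_mul]
          rw [Finset.sum_sub_distrib]
          simp only [ite_mul, zero_mul, one_mul]
          rw [Finset.sum_ite_eq' univ.powerset univ f, Finset.sum_ite_eq' univ.powerset ∅ f]
          simp
  have hexp : Real.exp (f univ - f ∅) = v univ / v ∅ := by
    rw [Real.exp_sub, hf]
    simp only
    rw [Real.exp_log (hv univ), Real.exp_log (hv ∅)]
  have hgoal : (∑ j : F, ∑ c ∈ (univ.erase j).powerset,
      ((Nat.factorial c.card * Nat.factorial (m - c.card - 1) : ℝ) /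
        Nat.factorial m) * (Real.log (v (insert j c)) - Real.log (v c)))
      = f univ - f ∅ := by
    rw [← key]
    refine Finset.sum_congr rfl fun j _ => Finset.sum_congr rfl fun c _ => ?_
    simp only [hw, hf]
    push_cast
    ring
  rw [hgoal, hexp, mul_comm, div_mul_cancel₀ _ (ne_of_gt (hv ∅))]
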